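/- Let M be a compact positively invariant and locally accessible set. Then for every invariant control set C ⊂ M there exists a compact neighborhood 𝒰 of C such that C = ⋂_{x∈𝒰} cl O⁺_pc(x), where O⁺_pc(x) denotes the set of points reachable from x with piecewise constant controls. -/

import Mathlib

open MeasureTheory Set intervalIntegral
open scoped NNReal

theorem gronwall_core {E : Type*} [NormedAddCommGroup E] [NormedSpace ℝ E]
    {p q : ℝ → E} {A B : ℝ → E} {T L c G : ℝ} {g : ℝ → ℝ}
    (hT : 0 ≤ T) (hL : 0 < L)
    (hpc : Continuous p) (hqc : Continuous q)
    (hA : IntervalIntegrable A volume 0 T) (hB : IntervalIntegrable B volume 0 T)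
    (hg : IntervalIntegrable g volume 0 T) (hg0 : ∀ s, 0 ≤ g s)
    (hc : ‖p 0 - q 0‖ ≤ c)
    (hp : ∀ t ∈ Icc (0:ℝ) T, p t = p 0 + ∫ s in (0:ℝ)..t, A s)
    (hq : ∀ t ∈ Icc (0:ℝ) T, q t = q 0 + ∫ s in (0:ℝ)..t, B s)
    (hb : ∀ s ∈ Ico (0:ℝ) T, ‖A s - B s‖ ≤ L * ‖p s - q s‖ + g s)
    (hG : (∫ s in (0:ℝ)..T, g s) ≤ G) :
    ∀ t ∈ Icc (0:ℝ) T, ‖p t - q t‖ ≤ (c + G) * Real.exp (L * T) := by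
  have hc0 : 0 ≤ c := le_trans (norm_nonneg _) hc
  have hG0 : 0 ≤ G := le_trans (intervalIntegral.integral_nonneg hT fun s _ => hg0 s) hG
  set δ : ℝ → ℝ := fun t => ‖p t - q t‖ with hδ
  have hδc : Continuous δ := (hpc.sub hqc).norm
  have hδ0 : ∀ t, 0 ≤ δ t := fun t => norm_nonneg _
  set F : ℝ → ℝ := fun t => ∫ s in (0:ℝ)..t, δ s with hF
  have hFc : Continuous F :=
    intervalIntegral.continuous_primitive (fun a b => hδc.intervalIntegrable a b) 0
  have hF' : ∀ t : ℝ, HasDerivAt F (δ t) t := fun t =>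
    intervalIntegral.integral_hasDerivAt_right (hδc.intervalIntegrable 0 t)
      (hδc.stronglyMeasurableAtFilter _ _) hδc.continuousAt
  have hFnn : ∀ t ∈ Icc (0:ℝ) T, 0 ≤ F t := fun t ht =>
    intervalIntegral.integral_nonneg ht.1 fun s _ => hδ0 s
  have key : ∀ t ∈ Icc (0:ℝ) T, t ≠ T → δ t ≤ (c + G) + L * F t := by
    intro t ht htT
    have ht' : t < T := lt_of_le_of_ne ht.2 htT
    have hsub : Icc (0:ℝ) t ⊆ Icc 0 T := Icc_subset_Icc le_rfl ht.2
    have hsub' : Set.uIcc (0:ℝ) t ⊆ Set.uIcc 0 T := by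
      rw [Set.uIcc_of_le ht.1, Set.uIcc_of_le hT]; exact hsub
    have h1 : δ t ≤ c + ∫ s in (0:ℝ)..t, ‖A s - B s‖ := by
      have heq : p t - q t = (p 0 - q 0) + ∫ s in (0:ℝ)..t, (A s - B s) := by
        rw [hp t ht, hq t ht,
          intervalIntegral.integral_sub (hA.mono_set hsub') (hB.mono_set hsub')]
        abel
      calc δ t = ‖(p 0 - q 0) + ∫ s in (0:ℝ)..t, (A s - B s)‖ := by
            show ‖p t - q t‖ = _; rw [heq]
        _ ≤ ‖p 0 - q 0‖ + ‖∫ s in (0:ℝ)..t, (A s - B s)‖ := norm_add_le _ _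
        _ ≤ c + ∫ s in (0:ℝ)..t, ‖A s - B s‖ := by
            gcongr
            exact intervalIntegral.norm_integral_le_integral_norm ht.1
    have hABi : IntervalIntegrable (fun s => ‖A s - B s‖) volume 0 t :=
      ((hA.mono_set hsub').sub (hB.mono_set hsub')).norm
    have hδi : IntervalIntegrable (fun s => L * δ s) volume 0 t :=
      (continuous_const.mul hδc).intervalIntegrable 0 t
    have hRHSi : IntervalIntegrable (fun s => L * δ s + g s) volume 0 t :=
      hδi.add (hg.mono_set hsub')
    have h2 : (∫ s in (0:ℝ)..t, ‖A s - B s‖) ≤ ∫ s in (0:ℝ)..t, (L * δ s + g s) := by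
      apply intervalIntegral.integral_mono_ae_restrict ht.1 hABi hRHSi
      filter_upwards [ae_restrict_mem measurableSet_Icc] with s hs
      exact hb s ⟨hs.1, lt_of_le_of_lt hs.2 ht'⟩
    have h3 : (∫ s in (0:ℝ)..t, (L * δ s + g s)) = L * F t + ∫ s in (0:ℝ)..t, g s := by
      rw [intervalIntegral.integral_add hδi (hg.mono_set hsub'),
        intervalIntegral.integral_const_mul]
    have h4 : (∫ s in (0:ℝ)..t, g s) ≤ G := by
      refine le_trans ?_ hG
      have hadj := intervalIntegral.integral_add_adjacent_intervals (a := (0:ℝ)) (b := t) (c := T)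
        (hg.mono_set hsub') (hg.mono_set (by
          rw [Set.uIcc_of_le ht.2, Set.uIcc_of_le hT]; exact Icc_subset_Icc ht.1 le_rfl))
      have hnn : 0 ≤ ∫ s in t..T, g s := intervalIntegral.integral_nonneg ht.2 fun s _ => hg0 s
      linarith
    linarith
  have main : ∀ t ∈ Icc (0:ℝ) T, ‖F t‖ ≤ gronwallBound 0 L (c + G) (t - 0) := by
    apply norm_le_gronwallBound_of_norm_deriv_right_le (f' := δ) hFc.continuousOn
    · exact fun t _ => (hF' t).hasDerivWithinAt
    · simp [hF, intervalIntegral.integral_same]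
    · intro t ht
      rw [Real.norm_of_nonneg (hδ0 t), Real.norm_of_nonneg (hFnn t ⟨ht.1, le_of_lt ht.2⟩)]
      have := key t ⟨ht.1, le_of_lt ht.2⟩ (ne_of_lt ht.2)
      linarith
  have bnd : ∀ t ∈ Icc (0:ℝ) T, t ≠ T → δ t ≤ (c + G) * Real.exp (L * t) := by
    intro t ht htT
    have hkey := key t ht htT
    have hmain := main t ht
    rw [Real.norm_of_nonneg (hFnn t ht), sub_zero, gronwallBound_of_K_ne_0 (ne_of_gt hL)] at hmain
    simp only [zero_mul, zero_add] at hmain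
    have h1 : δ t ≤ (c + G) + L * ((c+G)/L * (Real.exp (L*t) - 1)) := by
      refine hkey.trans ?_; gcongr
    have hsimp : (c + G) + L * ((c+G)/L * (Real.exp (L*t) - 1)) = (c+G) * Real.exp (L*t) := by
      field_simp; ring
    rw [hsimp] at h1; exact h1
  intro t ht
  rcases eq_or_ne t T with hteq | htne
  · subst hteq
    rcases eq_or_lt_of_le ht.1 with h0 | h0
    · -- t = 0 (= T)
      have h1 : δ t ≤ c + G := by
        have : δ t ≤ c := by rw [hδ, ← h0]; exact hc
        linarith
      refine h1.trans ?_
      exact le_mul_of_one_le_right (by linarith) (Real.one_le_exp (by positivity))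
    · have hcont : ContinuousWithinAt δ (Ico 0 t) t := hδc.continuousWithinAt
      have hev : ∀ s ∈ Ico (0:ℝ) t, δ s ≤ (c + G) * Real.exp (L * t) := by
        intro s hs
        have := bnd s ⟨hs.1, le_of_lt hs.2⟩ (ne_of_lt hs.2)
        refine this.trans (mul_le_mul_of_nonneg_left ?_ (by linarith))
        exact Real.exp_le_exp.2 (mul_le_mul_of_nonneg_left (le_of_lt hs.2) hL.le)
      have hmem : t ∈ closure (Ico (0:ℝ) t) := by
        rw [closure_Ico (ne_of_lt h0)]; exact ⟨le_of_lt h0, le_rfl⟩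
      exact ContinuousWithinAt.closure_le hmem hcont continuousWithinAt_const hev
  · have := bnd t ht htne
    refine this.trans (mul_le_mul_of_nonneg_left ?_ (by linarith))
    exact Real.exp_le_exp.2 (mul_le_mul_of_nonneg_left ht.2 hL.le)

open MeasureTheory Set Topology

theorem II_of_bound {E : Type*} [NormedAddCommGroup E] {h : ℝ → E}
    (hm : AEStronglyMeasurable h volume) (C : ℝ) (a b : ℝ)
    (hb : ∀ s ∈ Set.uIcc a b, ‖h s‖ ≤ C) : IntervalIntegrable h volume a b := by
  rw [intervalIntegrable_iff]
  apply Integrable.mono' (g := fun _ => C) (integrableOn_const measure_Ioc_lt_top.ne)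
    hm.restrict
  filter_upwards [ae_restrict_mem measurableSet_Ioc] with s hs
  exact hb s (Set.Ioc_subset_Icc_self hs)

variable {d m : ℕ}

/-- measurability of the Carathéodory integrand -/
theorem integrand_meas (f0 : (Fin d → ℝ) → (Fin d → ℝ)) (f : Fin m → (Fin d → ℝ) → (Fin d → ℝ))
    (hf0 : Continuous f0) (hf : ∀ i, Continuous (f i))
    {v : ℝ → (Fin m → ℝ)} (hv : Measurable v) {y : ℝ → (Fin d → ℝ)} (hy : Continuous y) :
    Measurable (fun s => f0 (y s) + ∑ i, v s i • f i (y s)) := by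
  apply Measurable.add
  · exact (hf0.comp hy).measurable
  · apply Finset.measurable_sum
    intro i _
    exact ((measurable_pi_apply i).comp hv).smul ((hf i).comp hy).measurable

/-- interval integrability of the Carathéodory integrand -/
theorem integrand_II {f0 : (Fin d → ℝ) → (Fin d → ℝ)} {f : Fin m → (Fin d → ℝ) → (Fin d → ℝ)}
    (hf0 : Continuous f0) (hf : ∀ i, Continuous (f i))
    {v : ℝ → (Fin m → ℝ)} (hv : Measurable v) {R : ℝ} (hvR : ∀ t, ‖v t‖ ≤ R)
    {y : ℝ → (Fin d → ℝ)} (hy : Continuous y) (a b : ℝ) :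
    IntervalIntegrable (fun s => f0 (y s) + ∑ i, v s i • f i (y s)) volume a b := by
  have hR : 0 ≤ R := le_trans (norm_nonneg _) (hvR 0)
  have hgc : Continuous (fun s => ‖f0 (y s)‖ + R * ∑ i, ‖f i (y s)‖) := by
    apply ((hf0.comp hy).norm.add (continuous_const.mul _))
    exact continuous_finset_sum _ fun i _ => ((hf i).comp hy).norm
  obtain ⟨C, hC⟩ := (isCompact_uIcc (a := a) (b := b)).exists_bound_of_continuousOn
    hgc.continuousOn
  apply II_of_bound (integrand_meas f0 f hf0 hf hv hy).aestronglyMeasurable C a b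
  intro s hs
  have h2 : ∑ i, ‖v s i • f i (y s)‖ ≤ ∑ i, R * ‖f i (y s)‖ := by
    refine Finset.sum_le_sum fun i _ => ?_
    rw [norm_smul]
    exact mul_le_mul_of_nonneg_right ((norm_le_pi_norm (v s) i).trans (hvR s)) (norm_nonneg _)
  have h1 : ‖f0 (y s) + ∑ i, v s i • f i (y s)‖ ≤ ‖f0 (y s)‖ + R * ∑ i, ‖f i (y s)‖ := by
    refine (norm_add_le _ _).trans ?_
    rw [Finset.mul_sum]
    exact add_le_add le_rfl ((norm_sum_le _ _).trans h2)
  exact h1.trans ((le_abs_self _).trans (hC s hs))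

/-- Master comparison lemma for two Carathéodory solutions. -/
theorem comparison_core {K0 : ℝ≥0} {K : Fin m → ℝ≥0}
    {f0 : (Fin d → ℝ) → (Fin d → ℝ)} {f : Fin m → (Fin d → ℝ) → (Fin d → ℝ)}
    (hK0 : LipschitzWith K0 f0) (hK : ∀ i, LipschitzWith (K i) (f i))
    {R : ℝ} (hR : 0 ≤ R) {L : ℝ} (hL : (K0:ℝ) + R * ∑ i, (K i : ℝ) + 1 ≤ L)
    {T : ℝ} (hT : 0 ≤ T) {v w : ℝ → (Fin m → ℝ)}
    (hv : Measurable v) (hvR : ∀ t, ‖v t‖ ≤ R)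
    (hw : Measurable w) (hwR : ∀ t, ‖w t‖ ≤ R)
    {p q : ℝ → (Fin d → ℝ)} (hpc : Continuous p) (hqc : Continuous q)
    (hp : ∀ t ∈ Icc (0:ℝ) T, p t = p 0 + ∫ s in (0:ℝ)..t, (f0 (p s) + ∑ i, v s i • f i (p s)))
    (hq : ∀ t ∈ Icc (0:ℝ) T, q t = q 0 + ∫ s in (0:ℝ)..t, (f0 (q s) + ∑ i, w s i • f i (q s)))
    {Bf : ℝ} (hBf : 0 ≤ Bf) (hfB : ∀ (i : Fin m), ∀ s ∈ Icc (0:ℝ) T, ‖f i (q s)‖ ≤ Bf) :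
    ∀ t ∈ Icc (0:ℝ) T,
      ‖p t - q t‖ ≤ (‖p 0 - q 0‖ + ((m : ℝ) * Bf) * ∫ s in (0:ℝ)..T, ‖v s - w s‖)
        * Real.exp (L * T) := by
  have hL0 : 0 < L := by
    have h1 : (0:ℝ) ≤ (K0:ℝ) := K0.2
    have h2 : (0:ℝ) ≤ ∑ i, (K i : ℝ) := Finset.sum_nonneg fun i _ => (K i).2
    nlinarith
  set A : ℝ → (Fin d → ℝ) := fun s => f0 (p s) + ∑ i, v s i • f i (p s) with hA
  set B : ℝ → (Fin d → ℝ) := fun s => f0 (q s) + ∑ i, w s i • f i (q s) with hB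
  have hAi : IntervalIntegrable A volume 0 T :=
    integrand_II hK0.continuous (fun i => (hK i).continuous) hv hvR hpc 0 T
  have hBi : IntervalIntegrable B volume 0 T :=
    integrand_II hK0.continuous (fun i => (hK i).continuous) hw hwR hqc 0 T
  set g : ℝ → ℝ := fun s => ((m : ℝ) * Bf) * ‖v s - w s‖ with hg
  have hg0 : ∀ s, 0 ≤ g s := fun s => by positivity
  have hvwi : IntervalIntegrable (fun s => ‖v s - w s‖) volume 0 T := by
    apply II_of_bound ((hv.sub hw).norm).aestronglyMeasurable (2*R)
    intro s _
    rw [Real.norm_of_nonneg (norm_nonneg _)]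
    calc ‖v s - w s‖ ≤ ‖v s‖ + ‖w s‖ := norm_sub_le _ _
      _ ≤ 2*R := by linarith [hvR s, hwR s]
  have hgi : IntervalIntegrable g volume 0 T := hvwi.const_mul _
  have hb : ∀ s ∈ Ico (0:ℝ) T, ‖A s - B s‖ ≤ L * ‖p s - q s‖ + g s := by
    intro s hs
    have hsIcc : s ∈ Icc (0:ℝ) T := ⟨hs.1, hs.2.le⟩
    have hsplit : A s - B s =
        (f0 (p s) - f0 (q s)) + ∑ i, (v s i • f i (p s) - w s i • f i (q s)) := by
      simp only [hA, hB, Finset.sum_sub_distrib]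
      abel
    have hterm : ∀ i : Fin m, ‖v s i • f i (p s) - w s i • f i (q s)‖ ≤
        R * ((K i : ℝ) * ‖p s - q s‖) + ‖v s - w s‖ * Bf := by
      intro i
      have hdecomp : v s i • f i (p s) - w s i • f i (q s) =
          v s i • (f i (p s) - f i (q s)) + (v s i - w s i) • f i (q s) := by
        rw [smul_sub, sub_smul]; abel
      rw [hdecomp]
      refine (norm_add_le _ _).trans ?_
      rw [norm_smul, norm_smul]
      have hlip : ‖f i (p s) - f i (q s)‖ ≤ (K i : ℝ) * ‖p s - q s‖ := by
        have := (hK i).dist_le_mul (p s) (q s)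
        rwa [dist_eq_norm, dist_eq_norm] at this
      have h1 : ‖v s i‖ * ‖f i (p s) - f i (q s)‖ ≤ R * ((K i : ℝ) * ‖p s - q s‖) :=
        mul_le_mul ((norm_le_pi_norm (v s) i).trans (hvR s)) hlip (norm_nonneg _) hR
      have hcoord : ‖v s i - w s i‖ ≤ ‖v s - w s‖ := by
        simpa using norm_le_pi_norm (v s - w s) i
      have h2 : ‖v s i - w s i‖ * ‖f i (q s)‖ ≤ ‖v s - w s‖ * Bf :=
        mul_le_mul hcoord (hfB i s hsIcc) (norm_nonneg _)
          (le_trans (norm_nonneg _) hcoord)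
      linarith
    have hK0' : ‖f0 (p s) - f0 (q s)‖ ≤ (K0:ℝ) * ‖p s - q s‖ := by
      have := hK0.dist_le_mul (p s) (q s)
      rwa [dist_eq_norm, dist_eq_norm] at this
    have hsum : ‖∑ i, (v s i • f i (p s) - w s i • f i (q s))‖ ≤
        R * (∑ i, (K i : ℝ)) * ‖p s - q s‖ + (m : ℝ) * (‖v s - w s‖ * Bf) := by
      refine (norm_sum_le _ _).trans ?_
      calc ∑ i, ‖v s i • f i (p s) - w s i • f i (q s)‖
          ≤ ∑ i : Fin m, (R * ((K i : ℝ) * ‖p s - q s‖) + ‖v s - w s‖ * Bf) :=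
            Finset.sum_le_sum fun i _ => hterm i
        _ = R * (∑ i, (K i : ℝ)) * ‖p s - q s‖ + (m : ℝ) * (‖v s - w s‖ * Bf) := by
            have e1 : ∑ i : Fin m, R * ((K i : ℝ) * ‖p s - q s‖)
                = R * (∑ i, (K i : ℝ)) * ‖p s - q s‖ := by
              simp [Finset.mul_sum, Finset.sum_mul, mul_assoc]
            have e2 : ∑ _i : Fin m, (‖v s - w s‖ * Bf) = (m : ℝ) * (‖v s - w s‖ * Bf) := by
              simp [Finset.sum_const, Finset.card_univ, nsmul_eq_mul]
            rw [Finset.sum_add_distrib, e1, e2]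
    have htot : ‖A s - B s‖ ≤ ((K0:ℝ) + R * ∑ i, (K i : ℝ)) * ‖p s - q s‖ + g s := by
      rw [hsplit]
      refine (norm_add_le _ _).trans ?_
      have : g s = (m : ℝ) * (‖v s - w s‖ * Bf) := by rw [hg]; ring
      rw [this]
      nlinarith [norm_nonneg (p s - q s)]
    refine htot.trans ?_
    have hnn : (0:ℝ) ≤ ‖p s - q s‖ := norm_nonneg _
    have : ((K0:ℝ) + R * ∑ i, (K i : ℝ)) * ‖p s - q s‖ ≤ L * ‖p s - q s‖ :=
      mul_le_mul_of_nonneg_right (by linarith) hnn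
    linarith
  have hGdef : (∫ s in (0:ℝ)..T, g s) = ((m:ℝ) * Bf) * ∫ s in (0:ℝ)..T, ‖v s - w s‖ := by
    rw [hg]; exact intervalIntegral.integral_const_mul _ _
  exact gronwall_core hT hL0 hpc hqc hAi hBi hgi hg0 le_rfl hp hq hb (le_of_eq hGdef)

/-- A priori bound on Carathéodory solutions. -/
theorem apriori_core {K0 : ℝ≥0} {K : Fin m → ℝ≥0}
    {f0 : (Fin d → ℝ) → (Fin d → ℝ)} {f : Fin m → (Fin d → ℝ) → (Fin d → ℝ)}
    (hK0 : LipschitzWith K0 f0) (hK : ∀ i, LipschitzWith (K i) (f i))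
    {R : ℝ} (hR : 0 ≤ R) {L : ℝ} (hL : (K0:ℝ) + R * ∑ i, (K i : ℝ) + 1 ≤ L)
    {T : ℝ} (hT : 0 ≤ T) {v : ℝ → (Fin m → ℝ)}
    (hv : Measurable v) (hvR : ∀ t, ‖v t‖ ≤ R)
    {p : ℝ → (Fin d → ℝ)} (hpc : Continuous p)
    (hp : ∀ t ∈ Icc (0:ℝ) T, p t = p 0 + ∫ s in (0:ℝ)..t, (f0 (p s) + ∑ i, v s i • f i (p s))) :
    ∀ t ∈ Icc (0:ℝ) T, ‖p t - p 0‖ ≤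
      (T * ((‖f0 0‖ + R * ∑ i, ‖f i 0‖) + L * ‖p 0‖)) * Real.exp (L * T) := by
  have hK0nn : (0:ℝ) ≤ (K0:ℝ) := K0.2
  have hKsum : (0:ℝ) ≤ ∑ i, (K i : ℝ) := Finset.sum_nonneg fun i _ => (K i).2
  have hL0 : 0 < L := by nlinarith
  set c0 : ℝ := ‖f0 0‖ + R * ∑ i, ‖f i 0‖ with hc0def
  have hc0nn : 0 ≤ c0 := by positivity
  set g : ℝ → ℝ := fun _ => c0 + L * ‖p 0‖ with hgdef
  have hg0 : ∀ s, 0 ≤ g s := fun s => by positivity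
  have hq : ∀ t ∈ Icc (0:ℝ) T, (fun _ : ℝ => p 0) t = p 0 + ∫ s in (0:ℝ)..t, (0 : Fin d → ℝ) := by
    intro t _; simp
  have hb : ∀ s ∈ Ico (0:ℝ) T,
      ‖(f0 (p s) + ∑ i, v s i • f i (p s)) - 0‖ ≤ L * ‖p s - p 0‖ + g s := by
    intro s _
    rw [sub_zero]
    have hnf0 : ‖f0 (p s)‖ ≤ ‖f0 0‖ + (K0:ℝ) * ‖p s‖ := by
      have h := hK0.dist_le_mul (p s) 0
      rw [dist_eq_norm, dist_eq_norm, sub_zero] at h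
      calc ‖f0 (p s)‖ ≤ ‖f0 0‖ + ‖f0 (p s) - f0 0‖ := by
            have := norm_sub_norm_le (f0 (p s)) (f0 0); linarith [norm_sub_rev (f0 (p s)) (f0 0) ▸ this]
        _ ≤ ‖f0 0‖ + (K0:ℝ) * ‖p s‖ := by linarith
    have hnfi : ∀ i : Fin m, ‖f i (p s)‖ ≤ ‖f i 0‖ + (K i:ℝ) * ‖p s‖ := by
      intro i
      have h := (hK i).dist_le_mul (p s) 0
      rw [dist_eq_norm, dist_eq_norm, sub_zero] at h
      have h2 := norm_sub_norm_le (f i (p s)) (f i 0)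
      linarith
    have hsum : ‖∑ i, v s i • f i (p s)‖ ≤ ∑ i, R * (‖f i 0‖ + (K i:ℝ) * ‖p s‖) := by
      refine (norm_sum_le _ _).trans (Finset.sum_le_sum fun i _ => ?_)
      rw [norm_smul]
      exact mul_le_mul ((norm_le_pi_norm (v s) i).trans (hvR s)) (hnfi i) (norm_nonneg _)  hR
    have hsum2 : ∑ i, R * (‖f i 0‖ + (K i:ℝ) * ‖p s‖)
        = R * (∑ i, ‖f i 0‖) + R * (∑ i, (K i:ℝ)) * ‖p s‖ := by
      simp [Finset.sum_add_distrib, Finset.mul_sum, Finset.sum_mul, mul_assoc, mul_add]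
    have htri : ‖p s‖ ≤ ‖p s - p 0‖ + ‖p 0‖ := by
      have := norm_add_le (p s - p 0) (p 0); simpa using this
    have hnorm : ‖f0 (p s) + ∑ i, v s i • f i (p s)‖
        ≤ c0 + ((K0:ℝ) + R * ∑ i, (K i:ℝ)) * ‖p s‖ := by
      refine (norm_add_le _ _).trans ?_
      rw [hc0def]
      have := hsum.trans (le_of_eq hsum2)
      nlinarith
    refine hnorm.trans ?_
    show _ ≤ L * ‖p s - p 0‖ + (c0 + L * ‖p 0‖)
    have hps : 0 ≤ ‖p s‖ := norm_nonneg _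
    have hps0 : 0 ≤ ‖p s - p 0‖ := norm_nonneg _
    have hp00 : 0 ≤ ‖p 0‖ := norm_nonneg _
    have f1 : ((K0:ℝ) + R * ∑ i, (K i:ℝ)) * ‖p s‖ ≤ (L - 1) * ‖p s‖ :=
      mul_le_mul_of_nonneg_right (by linarith) hps
    have f2 : (L - 1) * ‖p s‖ ≤ (L - 1) * (‖p s - p 0‖ + ‖p 0‖) :=
      mul_le_mul_of_nonneg_left htri (by nlinarith [mul_nonneg hR hKsum])
    nlinarith
  have hres := gronwall_core (c := 0) (G := T * (c0 + L * ‖p 0‖)) hT hL0 hpc continuous_const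
    (integrand_II hK0.continuous (fun i => (hK i).continuous) hv hvR hpc 0 T)
    (continuous_const.intervalIntegrable 0 T)
    (continuous_const.intervalIntegrable 0 T) hg0 (by simp) hp hq hb
    (by rw [intervalIntegral.integral_const, smul_eq_mul, sub_zero]; exact le_rfl)
  intro t ht
  have := hres t ht
  simpa using this



open MeasureTheory Set Topology

open MeasureTheory Set Topology

/-- A control-affine system `ẋ = f₀(x) + ∑ vᵢ(t) fᵢ(x)` on `ℝ^d` with Lipschitz
continuous vector fields and compact control range `V ⊆ ℝ^m`.  The (unique, global)
solutions are bundled as the data `φ` together with their defining properties. -/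
structure CAS (d m : ℕ) where
  /-- the drift vector field -/
  f0 : (Fin d → ℝ) → (Fin d → ℝ)
  /-- the control vector fields -/
  f : Fin m → (Fin d → ℝ) → (Fin d → ℝ)
  /-- the control range -/
  V : Set (Fin m → ℝ)
  lip0 : ∃ K, LipschitzWith K f0
  lip : ∀ i, ∃ K, LipschitzWith K (f i)
  V_compact : IsCompact V
  /-- the solution map: `φ x v t` is the solution at time `t` starting at `x` with control `v` -/
  φ : (Fin d → ℝ) → (ℝ → (Fin m → ℝ)) → ℝ → (Fin d → ℝ)
  φ_init : ∀ x v, φ x v 0 = x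
  φ_cont : ∀ x v, Continuous (φ x v)
  /-- solutions are (Carathéodory) solutions of the ODE -/
  φ_sol : ∀ (x : Fin d → ℝ) (v : ℝ → (Fin m → ℝ)), Measurable v → (∀ t, v t ∈ V) →
    ∀ t, 0 ≤ t →
      φ x v t = x + ∫ s in (0:ℝ)..t, (f0 (φ x v s) + ∑ i, v s i • f (i) (φ x v s))

namespace CAS

variable {d m : ℕ}

/-- the set of admissible controls -/
def ctrl (S : CAS d m) : Set (ℝ → (Fin m → ℝ)) :=
  {v | Measurable v ∧ ∀ t, v t ∈ S.V}

/-- a control is piecewise constant if it has only finitely many discontinuities on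
every bounded interval, i.e. it is constant between the members of a sequence of
switching times tending to infinity -/
def PiecewiseConst (v : ℝ → (Fin m → ℝ)) : Prop :=
  ∃ τ : ℕ → ℝ, τ 0 = 0 ∧ StrictMono τ ∧ Filter.Tendsto τ Filter.atTop Filter.atTop ∧
    ∀ n, ∀ t ∈ Ico (τ n) (τ (n + 1)), v t = v (τ n)

/-- the reachable set from `x` -/
def reach (S : CAS d m) (x : Fin d → ℝ) : Set (Fin d → ℝ) :=
  {y | ∃ v ∈ S.ctrl, ∃ t ≥ (0:ℝ), S.φ x v t = y}

/-- the set reachable from `x` with piecewise constant controls -/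
def reachPC (S : CAS d m) (x : Fin d → ℝ) : Set (Fin d → ℝ) :=
  {y | ∃ v ∈ S.ctrl, PiecewiseConst v ∧ ∃ t ≥ (0:ℝ), S.φ x v t = y}

/-- the reachable set from `x` up to time `T` -/
def reachLe (S : CAS d m) (T : ℝ) (x : Fin d → ℝ) : Set (Fin d → ℝ) :=
  {y | ∃ v ∈ S.ctrl, ∃ t ∈ Icc (0:ℝ) T, S.φ x v t = y}

/-- the controllable set to `x` up to time `T` -/
def contrLe (S : CAS d m) (T : ℝ) (x : Fin d → ℝ) : Set (Fin d → ℝ) :=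
  {y | ∃ v ∈ S.ctrl, ∃ t ∈ Icc (0:ℝ) T, S.φ y v t = x}

/-- positive invariance of a set -/
def posInv (S : CAS d m) (M : Set (Fin d → ℝ)) : Prop :=
  ∀ x ∈ M, ∀ v ∈ S.ctrl, ∀ t ≥ (0:ℝ), S.φ x v t ∈ M

/-- invariance of a set -/
def inv (S : CAS d m) (M : Set (Fin d → ℝ)) : Prop :=
  ∀ t ≥ (0:ℝ), {y | ∃ x ∈ M, ∃ v ∈ S.ctrl, S.φ x v t = y} = M

/-- the two defining properties (i) controlled invariance and (ii) approximate
reachability of a control set -/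
def controlSetProps (S : CAS d m) (D : Set (Fin d → ℝ)) : Prop :=
  (∀ x ∈ D, ∃ v ∈ S.ctrl, ∀ t ≥ (0:ℝ), S.φ x v t ∈ D) ∧
  (∀ x ∈ D, D ⊆ closure (S.reach x))

/-- a control set: a maximal nonempty set with the properties `controlSetProps` -/
def isControlSet (S : CAS d m) (D : Set (Fin d → ℝ)) : Prop :=
  D.Nonempty ∧ S.controlSetProps D ∧
  ∀ D', D ⊆ D' → S.controlSetProps D' → D' = D

/-- an invariant control set -/
def isInvControlSet (S : CAS d m) (C : Set (Fin d → ℝ)) : Prop :=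
  S.isControlSet C ∧ ∀ x ∈ C, closure C = closure (S.reach x)

/-- local accessibility at a point -/
def locAccAt (S : CAS d m) (x : Fin d → ℝ) : Prop :=
  ∀ T > (0:ℝ), ∀ N ∈ 𝓝 x,
    (interior (S.reachLe T x) ∩ N).Nonempty ∧ (interior (S.contrLe T x) ∩ N).Nonempty

/-- local accessibility on a set -/
def locAccOn (S : CAS d m) (M : Set (Fin d → ℝ)) : Prop :=
  ∀ x ∈ M, S.locAccAt x

/-- the domain of attraction of a set -/
def domAttr (S : CAS d m) (C : Set (Fin d → ℝ)) : Set (Fin d → ℝ) :=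
  {x | (closure (S.reach x) ∩ C).Nonempty}

/-- the strict domain of attraction of an invariant control set -/
def domAttrStrict (S : CAS d m) (C : Set (Fin d → ℝ)) : Set (Fin d → ℝ) :=
  {x | (closure (S.reach x) ∩ C).Nonempty ∧
    ∀ C', S.isInvControlSet C' → (closure (S.reach x) ∩ C').Nonempty → C' = C}

end CAS

namespace CAS

variable {d m : ℕ}

theorem volterra (S : CAS d m) {v : ℝ → (Fin m → ℝ)} (hv : v ∈ S.ctrl) (x : Fin d → ℝ)
    {T : ℝ} : ∀ t ∈ Icc (0:ℝ) T, S.φ x v t = S.φ x v 0 +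
      ∫ s in (0:ℝ)..t, (S.f0 (S.φ x v s) + ∑ i, v s i • S.f i (S.φ x v s)) := by
  intro t ht
  rw [S.φ_init]
  exact S.φ_sol x v hv.1 hv.2 t ht.1

theorem exists_R (S : CAS d m) : ∃ R, 0 ≤ R ∧ ∀ u ∈ S.V, ‖u‖ ≤ R := by
  obtain ⟨C, hC⟩ := (isBounded_iff_forall_norm_le).1 S.V_compact.isBounded
  exact ⟨max C 0, le_max_right _ _, fun u hu => (hC u hu).trans (le_max_left _ _)⟩

theorem lip_norm_bound {K : ℝ≥0} {g : (Fin d → ℝ) → (Fin d → ℝ)}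
    (h : LipschitzWith K g) (z : Fin d → ℝ) : ‖g z‖ ≤ ‖g 0‖ + (K:ℝ) * ‖z‖ := by
  have hd := h.dist_le_mul z 0
  rw [dist_eq_norm, dist_eq_norm, sub_zero] at hd
  have := norm_sub_norm_le (g z) (g 0)
  linarith

/-- a bound on `‖f i (φ x w s)‖`, uniform over admissible controls `w` -/
theorem exists_Bf (S : CAS d m) (x : Fin d → ℝ) {T : ℝ} (hT : 0 ≤ T) :
    ∃ Bf, 0 ≤ Bf ∧ ∀ w ∈ S.ctrl, ∀ (i : Fin m), ∀ s ∈ Icc (0:ℝ) T,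
      ‖S.f i (S.φ x w s)‖ ≤ Bf := by
  obtain ⟨K0, hK0⟩ := S.lip0
  choose K hKf using S.lip
  obtain ⟨R, hR0, hRV⟩ := S.exists_R
  have hK0nn : (0:ℝ) ≤ (K0:ℝ) := K0.2
  have hKsum : (0:ℝ) ≤ ∑ i, (K i : ℝ) := Finset.sum_nonneg fun i _ => (K i).2
  set L : ℝ := (K0:ℝ) + R * ∑ i, (K i:ℝ) + 1 with hLdef
  have hL0 : 0 < L := by nlinarith [mul_nonneg hR0 hKsum]
  set ρ : ℝ := (T * ((‖S.f0 0‖ + R * ∑ i, ‖S.f i 0‖) + L * ‖x‖)) * Real.exp (L * T) with hρdef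
  have hρ0 : 0 ≤ ρ := by
    apply mul_nonneg (mul_nonneg hT _) (Real.exp_nonneg _)
    have : 0 ≤ R * ∑ i, ‖S.f i 0‖ := mul_nonneg hR0 (Finset.sum_nonneg fun i _ => norm_nonneg _)
    have : 0 ≤ L * ‖x‖ := mul_nonneg hL0.le (norm_nonneg _)
    positivity
  refine ⟨∑ j, (‖S.f j 0‖ + (K j : ℝ) * (‖x‖ + ρ)), Finset.sum_nonneg fun j _ => by positivity, ?_⟩
  intro w hw i s hs
  have hwR : ∀ t, ‖w t‖ ≤ R := fun t => hRV _ (hw.2 t)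
  have happ := apriori_core hK0 hKf hR0 le_rfl hT hw.1 hwR (S.φ_cont x w)
    (S.volterra hw x) s hs
  rw [S.φ_init] at happ
  have hρb : ‖S.φ x w s - x‖ ≤ ρ := by rw [hρdef, hLdef]; exact happ
  have hzb : ‖S.φ x w s‖ ≤ ‖x‖ + ρ := by
    have := norm_add_le (S.φ x w s - x) x
    simp only [sub_add_cancel] at this
    linarith
  have h1 : ‖S.f i (S.φ x w s)‖ ≤ ‖S.f i 0‖ + (K i : ℝ) * (‖x‖ + ρ) := by
    refine (lip_norm_bound (hKf i) _).trans ?_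
    have : (K i : ℝ) * ‖S.φ x w s‖ ≤ (K i : ℝ) * (‖x‖ + ρ) :=
      mul_le_mul_of_nonneg_left hzb (K i).2
    linarith
  refine h1.trans ?_
  exact Finset.single_le_sum (f := fun j => ‖S.f j 0‖ + (K j : ℝ) * (‖x‖ + ρ))
    (fun j _ => by positivity) (Finset.mem_univ i)

/-- continuous dependence on the initial value, uniformly over admissible controls -/
theorem dist_phi (S : CAS d m) {T : ℝ} (hT : 0 ≤ T) :
    ∃ CL > 0, ∀ {v : ℝ → (Fin m → ℝ)}, v ∈ S.ctrl → ∀ x y, ∀ t ∈ Icc (0:ℝ) T,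
      ‖S.φ x v t - S.φ y v t‖ ≤ CL * ‖x - y‖ := by
  obtain ⟨K0, hK0⟩ := S.lip0
  choose K hKf using S.lip
  obtain ⟨R, hR0, hRV⟩ := S.exists_R
  set L : ℝ := (K0:ℝ) + R * ∑ i, (K i:ℝ) + 1 with hLdef
  refine ⟨Real.exp (L * T), Real.exp_pos _, ?_⟩
  intro v hv x y t ht
  obtain ⟨Bf, hBf0, hBfb⟩ := S.exists_Bf y hT
  have hvR : ∀ t, ‖v t‖ ≤ R := fun t => hRV _ (hv.2 t)
  have hcomp := comparison_core hK0 hKf hR0 le_rfl hT hv.1 hvR hv.1 hvR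
    (S.φ_cont x v) (S.φ_cont y v) (S.volterra hv x) (S.volterra hv y) hBf0
    (fun i s hs => hBfb v hv i s hs) t ht
  rw [S.φ_init, S.φ_init] at hcomp
  rw [mul_comm]
  simpa using hcomp

/-- continuous dependence on the control in `L¹` -/
theorem phi_ctrl_close (S : CAS d m) (x : Fin d → ℝ) {T : ℝ} (hT : 0 ≤ T) {ε : ℝ}
    (hε : 0 < ε) : ∃ δ > 0, ∀ v w, v ∈ S.ctrl → w ∈ S.ctrl →
      (∫ s in (0:ℝ)..T, ‖v s - w s‖) < δ →
      ∀ t ∈ Icc (0:ℝ) T, ‖S.φ x v t - S.φ x w t‖ ≤ ε := by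
  obtain ⟨K0, hK0⟩ := S.lip0
  choose K hKf using S.lip
  obtain ⟨R, hR0, hRV⟩ := S.exists_R
  set L : ℝ := (K0:ℝ) + R * ∑ i, (K i:ℝ) + 1 with hLdef
  obtain ⟨Bf, hBf0, hBfb⟩ := S.exists_Bf x hT
  have hden : 0 < ((m:ℝ) * Bf + 1) * Real.exp (L * T) := by positivity
  refine ⟨ε / (((m:ℝ) * Bf + 1) * Real.exp (L * T)), div_pos hε hden, ?_⟩
  intro v w hv hw hint t ht
  have hvR : ∀ t, ‖v t‖ ≤ R := fun t => hRV _ (hv.2 t)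
  have hwR : ∀ t, ‖w t‖ ≤ R := fun t => hRV _ (hw.2 t)
  have hcomp := comparison_core hK0 hKf hR0 le_rfl hT hv.1 hvR hw.1 hwR
    (S.φ_cont x v) (S.φ_cont x w) (S.volterra hv x) (S.volterra hw x) hBf0
    (fun i s hs => hBfb w hw i s hs) t ht
  rw [S.φ_init, S.φ_init] at hcomp
  simp only [sub_self, norm_zero, zero_add] at hcomp
  set I : ℝ := ∫ s in (0:ℝ)..T, ‖v s - w s‖ with hIdef
  set δ : ℝ := ε / (((m:ℝ) * Bf + 1) * Real.exp (L * T)) with hδdef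
  refine hcomp.trans ?_
  have hδ0 : 0 < δ := div_pos hε hden
  have hmBf : 0 ≤ (m:ℝ) * Bf := by positivity
  have h1 : ((m:ℝ) * Bf) * I ≤ ((m:ℝ) * Bf + 1) * δ := by
    calc ((m:ℝ) * Bf) * I ≤ ((m:ℝ) * Bf) * δ := mul_le_mul_of_nonneg_left hint.le hmBf
      _ ≤ ((m:ℝ) * Bf + 1) * δ := by nlinarith
  have h2 : (((m:ℝ) * Bf + 1) * δ) * Real.exp (L * T) = ε := by
    rw [hδdef]; field_simp
  calc ((m:ℝ) * Bf) * I * Real.exp (L * T) ≤ (((m:ℝ) * Bf + 1) * δ) * Real.exp (L * T) :=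
        mul_le_mul_of_nonneg_right h1 (Real.exp_nonneg _)
    _ = ε := h2


/-- concatenation of controls and the semigroup property of solutions -/
theorem phi_concat (S : CAS d m) {v v' : ℝ → (Fin m → ℝ)} (hv : v ∈ S.ctrl)
    (hv' : v' ∈ S.ctrl) {t₀ : ℝ} (ht₀ : 0 ≤ t₀) (x : Fin d → ℝ) :
    ∃ w ∈ S.ctrl, w = (fun s => if s < t₀ then v s else v' (s - t₀)) ∧
      ∀ s, 0 ≤ s → S.φ x w (t₀ + s) = S.φ (S.φ x v t₀) v' s := by
  classical
  obtain ⟨K0, hK0⟩ := S.lip0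
  choose K hKf using S.lip
  obtain ⟨R, hR0, hRV⟩ := S.exists_R
  set w : ℝ → (Fin m → ℝ) := fun s => if s < t₀ then v s else v' (s - t₀) with hwdef
  have hwm : Measurable w := Measurable.ite measurableSet_Iio hv.1
    (hv'.1.comp (measurable_id.sub_const t₀))
  have hwV : ∀ t, w t ∈ S.V := by
    intro t
    by_cases h : t < t₀
    · simpa [hwdef, h] using hv.2 t
    · simpa [hwdef, h] using hv'.2 (t - t₀)
  have hwc : w ∈ S.ctrl := ⟨hwm, hwV⟩
  have hvR : ∀ t, ‖v t‖ ≤ R := fun t => hRV _ (hv.2 t)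
  have hv'R : ∀ t, ‖v' t‖ ≤ R := fun t => hRV _ (hv'.2 t)
  have hwR : ∀ t, ‖w t‖ ≤ R := fun t => hRV _ (hwV t)
  -- Step 1 : φ x w = φ x v on [0, t₀]
  have hzero : (∫ s in (0:ℝ)..t₀, ‖w s - v s‖) = 0 := by
    have hne : ∀ᵐ s : ℝ, s ≠ t₀ := by
      rw [Filter.eventually_iff, mem_ae_iff]
      have h : {s : ℝ | s ≠ t₀}ᶜ = {t₀} := by ext u; simp
      rw [h]
      exact measure_singleton t₀
    have hcong : (∫ s in (0:ℝ)..t₀, ‖w s - v s‖) = ∫ s in (0:ℝ)..t₀, (0:ℝ) := by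
      apply intervalIntegral.integral_congr_ae
      filter_upwards [hne] with s hs hmem
      rw [Set.uIoc_of_le ht₀] at hmem
      have hlt : s < t₀ := lt_of_le_of_ne hmem.2 hs
      simp [hwdef, hlt]
    rw [hcong, intervalIntegral.integral_zero]
  obtain ⟨Bf, hBf0, hBfb⟩ := S.exists_Bf x ht₀
  have heq1 : ∀ r ∈ Icc (0:ℝ) t₀, S.φ x w r = S.φ x v r := by
    intro r hr
    have hcomp := comparison_core hK0 hKf hR0 le_rfl ht₀ hwm hwR hv.1 hvR
      (S.φ_cont x w) (S.φ_cont x v) (S.volterra hwc x) (S.volterra hv x) hBf0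
      (fun i s hs => hBfb v hv i s hs) r hr
    rw [S.φ_init, S.φ_init, hzero] at hcomp
    simp only [sub_self, norm_zero, mul_zero, zero_add, zero_mul] at hcomp
    rw [← sub_eq_zero]
    exact norm_le_zero_iff.1 (by simpa using hcomp)
  have hyy : S.φ x w t₀ = S.φ x v t₀ := heq1 t₀ ⟨ht₀, le_rfl⟩
  refine ⟨w, hwc, rfl, ?_⟩
  intro s hs
  set y : Fin d → ℝ := S.φ x v t₀ with hydef
  set p : ℝ → (Fin d → ℝ) := fun r => S.φ x w (t₀ + r) with hpdef
  have hpco : Continuous p := (S.φ_cont x w).comp (continuous_const.add continuous_id)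
  set Aw : ℝ → (Fin d → ℝ) := fun u => S.f0 (S.φ x w u) + ∑ i, w u i • S.f i (S.φ x w u)
    with hAwdef
  have hAwi : ∀ a b : ℝ, IntervalIntegrable Aw volume a b := fun a b =>
    integrand_II hK0.continuous (fun i => (hKf i).continuous) hwm hwR (S.φ_cont x w) a b
  have hpvol : ∀ r ∈ Icc (0:ℝ) s,
      p r = p 0 + ∫ u in (0:ℝ)..r, (S.f0 (p u) + ∑ i, v' u i • S.f i (p u)) := by
    intro r hr
    have h1 : S.φ x w (t₀ + r) = x + ∫ u in (0:ℝ)..(t₀ + r), Aw u :=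
      S.φ_sol x w hwm hwV (t₀ + r) (by linarith [hr.1])
    have h2 : S.φ x w t₀ = x + ∫ u in (0:ℝ)..t₀, Aw u := S.φ_sol x w hwm hwV t₀ ht₀
    have hsplit : (∫ u in (0:ℝ)..t₀, Aw u) + (∫ u in t₀..(t₀ + r), Aw u)
        = ∫ u in (0:ℝ)..(t₀ + r), Aw u :=
      intervalIntegral.integral_add_adjacent_intervals (hAwi 0 t₀) (hAwi t₀ (t₀ + r))
    have hshift : (∫ u in (0:ℝ)..r, Aw (t₀ + u)) = ∫ u in t₀..(t₀ + r), Aw u := by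
      rw [intervalIntegral.integral_comp_add_left]
      norm_num
    have hcongr : (∫ u in (0:ℝ)..r, Aw (t₀ + u))
        = ∫ u in (0:ℝ)..r, (S.f0 (p u) + ∑ i, v' u i • S.f i (p u)) := by
      apply intervalIntegral.integral_congr
      intro u hu
      rw [Set.uIcc_of_le hr.1] at hu
      have hu0 : 0 ≤ u := hu.1
      have hcond : ¬ (t₀ + u < t₀) := by linarith
      simp only [hAwdef, hpdef, hwdef, hcond, if_false, add_sub_cancel_left]
    have hp0 : p 0 = S.φ x w t₀ := by show S.φ x w (t₀ + 0) = S.φ x w t₀; rw [add_zero]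
    calc p r = x + ∫ u in (0:ℝ)..(t₀ + r), Aw u := h1
      _ = (x + ∫ u in (0:ℝ)..t₀, Aw u)
          + ∫ u in (0:ℝ)..r, (S.f0 (p u) + ∑ i, v' u i • S.f i (p u)) := by
            rw [← hsplit, ← hshift, hcongr]; abel
      _ = p 0 + ∫ u in (0:ℝ)..r, (S.f0 (p u) + ∑ i, v' u i • S.f i (p u)) := by
            rw [hp0, h2]
  obtain ⟨Bf', hBf'0, hBf'b⟩ := S.exists_Bf y hs
  have hqvol := S.volterra hv' y (T := s)
  have hcomp := comparison_core hK0 hKf hR0 le_rfl hs hv'.1 hv'R hv'.1 hv'R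
    hpco (S.φ_cont y v') hpvol hqvol hBf'0 (fun i u hu => hBf'b v' hv' i u hu) s
    ⟨le_rfl.trans hs, le_rfl⟩
  have hp0y : p 0 = S.φ y v' 0 := by
    rw [S.φ_init, hpdef]
    simp only []
    rw [add_zero, hyy]
  rw [hp0y] at hcomp
  simp only [sub_self, norm_zero, zero_add] at hcomp
  have : ‖p s - S.φ y v' s‖ ≤ 0 := by
    refine hcomp.trans (le_of_eq ?_)
    simp
  have := norm_le_zero_iff.1 this
  rw [sub_eq_zero] at this
  exact this


theorem reach_trans (S : CAS d m) {x y : Fin d → ℝ} (hy : y ∈ S.reach x) :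
    S.reach y ⊆ S.reach x := by
  obtain ⟨v, hv, t₀, ht₀, hphiy⟩ := hy
  rintro z ⟨v', hv', s, hs, hphz⟩
  obtain ⟨w, hwc, -, hw⟩ := S.phi_concat hv hv' ht₀ x
  exact ⟨w, hwc, t₀ + s, by linarith, by rw [hw s hs, hphiy, hphz]⟩

theorem pc_const (u : Fin m → ℝ) : PiecewiseConst (fun _ : ℝ => u) := by
  refine ⟨fun n => (n : ℝ), by simp, Nat.strictMono_cast, tendsto_natCast_atTop_atTop,
    fun n t _ => rfl⟩

theorem const_ctrl (S : CAS d m) {u : Fin m → ℝ} (hu : u ∈ S.V) :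
    (fun _ : ℝ => u) ∈ S.ctrl := ⟨measurable_const, fun _ => hu⟩

theorem mem_reachPC_self (S : CAS d m) (hV : S.V.Nonempty) (x : Fin d → ℝ) :
    x ∈ S.reachPC x := by
  obtain ⟨u, hu⟩ := hV
  exact ⟨fun _ => u, S.const_ctrl hu, pc_const u, 0, le_rfl, S.φ_init x _⟩

theorem mem_reach_self (S : CAS d m) (hV : S.V.Nonempty) (x : Fin d → ℝ) :
    x ∈ S.reach x := by
  obtain ⟨u, hu⟩ := hV
  exact ⟨fun _ => u, S.const_ctrl hu, 0, le_rfl, S.φ_init x _⟩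

theorem reachPC_subset_reach (S : CAS d m) (x : Fin d → ℝ) : S.reachPC x ⊆ S.reach x := by
  rintro z ⟨v, hv, -, t, ht, hz⟩
  exact ⟨v, hv, t, ht, hz⟩

theorem reachLe_subset_reach (S : CAS d m) (T : ℝ) (x : Fin d → ℝ) :
    S.reachLe T x ⊆ S.reach x := by
  rintro z ⟨v, hv, t, ht, hz⟩
  exact ⟨v, hv, t, ht.1, hz⟩

/-- merging two piecewise constant controls at a nonnegative time -/
theorem pc_merge {v v' : ℝ → (Fin m → ℝ)} (hv : PiecewiseConst v) (hv' : PiecewiseConst v')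
    {t₀ : ℝ} (ht₀ : 0 ≤ t₀) :
    PiecewiseConst (fun s => if s < t₀ then v s else v' (s - t₀)) := by
  classical
  obtain ⟨τ, hτ0, hτm, hτtop, hτc⟩ := hv
  obtain ⟨σ, hσ0, hσm, hσtop, hσc⟩ := hv'
  have hσnn : ∀ n, 0 ≤ σ n := fun n => hσ0 ▸ hσm.monotone (Nat.zero_le n)
  rcases eq_or_lt_of_le ht₀ with h0 | h0
  · -- t₀ = 0
    refine ⟨σ, hσ0, hσm, hσtop, ?_⟩
    intro n t ht
    have ht0 : 0 ≤ t := le_trans (hσnn n) ht.1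
    have hσn0 : (0:ℝ) ≤ σ n := hσnn n
    have h1 : ¬ t < t₀ := by rw [← h0]; linarith
    have h2 : ¬ σ n < t₀ := by rw [← h0]; linarith
    simp only [h1, h2, if_false]
    rw [← h0, sub_zero, sub_zero]
    exact hσc n t ht
  · -- 0 < t₀
    obtain ⟨N, hN⟩ := Filter.eventually_atTop.1 (hτtop.eventually_ge_atTop t₀)
    set P : ℕ → Prop := fun n => τ n < t₀ with hPdef
    have hP0 : P 0 := by rw [hPdef]; simpa [hτ0] using h0
    set k : ℕ := Nat.findGreatest P N with hkdef
    have hPk : P k := Nat.findGreatest_spec (Nat.zero_le N) hP0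
    have hkN : k ≤ N := Nat.findGreatest_le N
    have hkltN : k < N := by
      rcases lt_or_eq_of_le hkN with h | h
      · exact h
      · exfalso; rw [h] at hPk; exact absurd hPk (not_lt.2 (hN N le_rfl))
    have hPk1 : ¬ P (k + 1) := Nat.findGreatest_is_greatest (Nat.lt_succ_self k) hkltN
    have hτk : τ k < t₀ := hPk
    have hτk1 : t₀ ≤ τ (k + 1) := not_lt.1 hPk1
    set θ : ℕ → ℝ := fun n => if n ≤ k then τ n else t₀ + σ (n - (k + 1)) with hθdef
    have hθ0 : θ 0 = 0 := by simp [hθdef, Nat.zero_le, hτ0]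
    have hθm : StrictMono θ := by
      apply strictMono_nat_of_lt_succ
      intro n
      rcases le_or_gt (n + 1) k with h1 | h1
      · have h2 : n ≤ k := Nat.le_of_succ_le h1
        simp only [hθdef, h1, h2, if_true]
        exact hτm (Nat.lt_succ_self n)
      · rcases le_or_gt n k with h2 | h2
        · have hnk : n = k := Nat.le_antisymm h2 (Nat.lt_succ_iff.1 h1)
          subst hnk
          simp only [hθdef, le_rfl, if_true, Nat.not_succ_le_self, if_false,
            Nat.add_sub_cancel, Nat.sub_self, hσ0, add_zero]
          exact lt_of_lt_of_le hτk (le_refl t₀)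
        · have h3 : ¬ n ≤ k := not_le.2 h2
          have h4 : ¬ n + 1 ≤ k := fun h => h3 (Nat.le_of_succ_le h)
          simp only [hθdef, h3, h4, if_false]
          have harith : n + 1 - (k + 1) = (n - (k + 1)) + 1 := by omega
          rw [harith]
          exact (add_lt_add_iff_left t₀).2 (hσm (Nat.lt_succ_self _))
    have hθtop : Filter.Tendsto θ Filter.atTop Filter.atTop := by
      apply Filter.Tendsto.congr' (f₁ := fun n => t₀ + σ (n - (k + 1)))
      · filter_upwards [Filter.eventually_ge_atTop (k + 1)] with n hn
        have : ¬ n ≤ k := by omega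
        simp [hθdef, this]
      · exact Filter.tendsto_atTop_add_const_left _ t₀
          (hσtop.comp (Filter.tendsto_sub_atTop_nat (k + 1)))
    refine ⟨θ, hθ0, hθm, hθtop, ?_⟩
    intro n t ht
    rcases le_or_gt (n + 1) k with h1 | h1
    · -- fully inside v
      have h2 : n ≤ k := Nat.le_of_succ_le h1
      simp only [hθdef, h1, h2, if_true] at ht
      have hlt : t < t₀ := lt_of_lt_of_le (lt_of_lt_of_le ht.2 (hτm.monotone h1)) hτk.le
      have hlt2 : τ n < t₀ := lt_of_le_of_lt (hτm.monotone h2) hτk  -- τ n ≤ τ k < t₀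
      simp only [hθdef, h2, if_true, hlt, hlt2, if_pos]
      exact hτc n t ht
    · rcases le_or_gt n k with h2 | h2
      · -- n = k : the piece [τ k, t₀)
        have hnk : n = k := Nat.le_antisymm h2 (Nat.lt_succ_iff.1 h1)
        subst hnk
        simp only [hθdef, le_rfl, if_true, Nat.not_succ_le_self, if_false,
          Nat.add_sub_cancel, Nat.sub_self, hσ0, add_zero] at ht
        have hlt : t < t₀ := ht.2
        simp only [hθdef, le_rfl, if_true, hlt, hτk, if_pos]
        have htmem : t ∈ Ico (τ k) (τ (k + 1)) := ⟨ht.1, lt_of_lt_of_le hlt hτk1⟩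
        exact hτc k t htmem
      · -- inside v'
        have h3 : ¬ n ≤ k := not_le.2 h2
        have h4 : ¬ n + 1 ≤ k := fun h => h3 (Nat.le_of_succ_le h)
        simp only [hθdef, h3, h4, if_false] at ht
        have harith : n + 1 - (k + 1) = (n - (k + 1)) + 1 := by omega
        rw [harith] at ht
        set j : ℕ := n - (k + 1) with hjdef
        have hge : t₀ ≤ t := le_trans (le_add_of_nonneg_right (hσnn j)) ht.1
        have hc1 : ¬ t < t₀ := not_lt.2 hge
        have hc2 : ¬ t₀ + σ j < t₀ := not_lt.2 (le_add_of_nonneg_right (hσnn j))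
        simp only [hθdef, h3, if_false, hc1, hc2, if_neg, not_false_iff]
        rw [add_sub_cancel_left]
        have htmem : t - t₀ ∈ Ico (σ j) (σ (j + 1)) := by
          constructor
          · linarith [ht.1]
          · linarith [ht.2]
        exact (hσc j (t - t₀) htmem).trans (if_neg hc2).symm


theorem reachPC_trans (S : CAS d m) {x y : Fin d → ℝ} (hy : y ∈ S.reachPC x) :
    S.reachPC y ⊆ S.reachPC x := by
  obtain ⟨v, hv, hvpc, t₀, ht₀, hphiy⟩ := hy
  rintro z ⟨v', hv', hv'pc, s, hs, hphz⟩
  obtain ⟨w, hwc, hwdef, hw⟩ := S.phi_concat hv hv' ht₀ x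
  refine ⟨w, hwc, ?_, t₀ + s, by linarith, by rw [hw s hs, hphiy, hphz]⟩
  rw [hwdef]
  exact pc_merge hvpc hv'pc ht₀

/-- approximation of an admissible control by a piecewise constant admissible control
in `L¹` on `[0, T]` -/
theorem exists_pc_approx (S : CAS d m) {v : ℝ → (Fin m → ℝ)} (hv : v ∈ S.ctrl)
    {T ε : ℝ} (hT : 0 ≤ T) (hε : 0 < ε) :
    ∃ w ∈ S.ctrl, PiecewiseConst w ∧ (∫ s in (0:ℝ)..T, ‖v s - w s‖) < ε := by
  classical
  obtain ⟨R, hR0, hRV⟩ := S.exists_R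
  have hvR : ∀ t, ‖v t‖ ≤ R := fun t => hRV _ (hv.2 t)
  have hVne : S.V.Nonempty := ⟨v 0, hv.2 0⟩
  set ε₂ : ℝ := ε / (8 * (T + 1)) with hε₂def
  have hT1 : (0:ℝ) < T + 1 := by linarith
  have hε₂0 : 0 < ε₂ := by positivity
  -- integrable truncation of v
  have hvII : IntervalIntegrable v volume 0 T :=
    II_of_bound hv.1.aestronglyMeasurable R 0 T (fun s _ => hvR s)
  set f : ℝ → (Fin m → ℝ) := (Ioc (0:ℝ) T).indicator v with hfdef
  have hfInt : Integrable f volume := by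
    rw [hfdef]
    exact ((intervalIntegrable_iff_integrableOn_Ioc_of_le hT).1 hvII).integrable_indicator
      measurableSet_Ioc
  -- continuous approximation
  obtain ⟨h, hhsupp, hhclose, hhcont, hhInt⟩ :=
    hfInt.exists_hasCompactSupport_integral_sub_le (show (0:ℝ) < ε/8 by positivity)
  -- uniform continuity on [0, T]
  have hUC := (isCompact_Icc (a := (0:ℝ)) (b := T)).uniformContinuousOn_of_continuous
    hhcont.continuousOn
  rw [Metric.uniformContinuousOn_iff] at hUC
  obtain ⟨η, hη0, hηball⟩ := hUC ε₂ hε₂0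
  -- nearest points of V to the grid values of h
  have hproj : ∀ n : ℕ, ∃ u ∈ S.V,
      Metric.infDist (h ((n:ℝ) * η)) S.V = dist (h ((n:ℝ) * η)) u := fun n =>
    S.V_compact.exists_infDist_eq_dist hVne _
  choose c hcV hcd using hproj
  set w : ℝ → (Fin m → ℝ) := fun t => c ⌊(max t 0) / η⌋₊ with hwdef
  have hwm : Measurable w :=
    measurable_from_nat.comp (((measurable_id.max measurable_const).div_const η).nat_floor)
  have hwV : ∀ t, w t ∈ S.V := fun t => hcV _
  have hwR : ∀ t, ‖w t‖ ≤ R := fun t => hRV _ (hwV t)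
  have hwII : IntervalIntegrable w volume 0 T :=
    II_of_bound hwm.aestronglyMeasurable R 0 T (fun s _ => hwR s)
  -- w is piecewise constant
  have hfl : ∀ (n : ℕ) (t : ℝ), (n:ℝ) * η ≤ t → t < ((n:ℝ) + 1) * η → ⌊(max t 0) / η⌋₊ = n := by
    intro n t h1 h2
    have ht0 : 0 ≤ t := le_trans (by positivity) h1
    rw [max_eq_left ht0]
    rw [Nat.floor_eq_iff (by positivity)]
    constructor
    · rw [le_div_iff₀ hη0]; exact h1
    · rw [div_lt_iff₀ hη0]; exact_mod_cast h2
  have hwpc : PiecewiseConst w := by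
    refine ⟨fun n => (n:ℝ) * η, by simp, ?_, ?_, ?_⟩
    · intro a b hab
      exact mul_lt_mul_of_pos_right (by exact_mod_cast hab) hη0
    · exact tendsto_natCast_atTop_atTop.atTop_mul_const hη0
    · intro n t ht
      have h2 : t < ((n:ℝ) + 1) * η := by
        have := ht.2; push_cast at this; exact this
      have e1 : ⌊(max t 0) / η⌋₊ = n := hfl n t ht.1 h2
      have e2 : ⌊(max ((n:ℝ) * η) 0) / η⌋₊ = n := by
        refine hfl n _ le_rfl ?_
        have : (0:ℝ) < η := hη0
        nlinarith
      show c _ = c _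
      rw [e1, e2]
  -- pointwise bound
  have key : ∀ t ∈ Icc (0:ℝ) T, ‖h t - w t‖ ≤ 2 * ε₂ + ‖h t - v t‖ := by
    intro t ht
    have ht0 : 0 ≤ t := ht.1
    set k : ℕ := ⌊(max t 0) / η⌋₊ with hkdef
    have hmax : max t 0 = t := max_eq_left ht0
    have hk1 : (k:ℝ) * η ≤ t := by
      have := Nat.floor_le (show 0 ≤ (max t 0) / η by positivity)
      rw [hmax] at this
      calc (k:ℝ) * η ≤ (t / η) * η := mul_le_mul_of_nonneg_right (by rw [hkdef, hmax]; exact this) hη0.le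
        _ = t := by field_simp
    have hk2 : t - (k:ℝ) * η < η := by
      have := Nat.lt_floor_add_one ((max t 0) / η)
      rw [hmax] at this
      have h2 : t / η < (k:ℝ) + 1 := by rw [hkdef, hmax]; exact_mod_cast this
      have := (div_lt_iff₀ hη0).1 h2
      nlinarith
    have hgmem : (k:ℝ) * η ∈ Icc (0:ℝ) T := ⟨by positivity, le_trans hk1 ht.2⟩
    have hdist : dist t ((k:ℝ) * η) < η := by
      rw [Real.dist_eq, abs_of_nonneg (by linarith)]
      linarith
    have h1 : dist (h t) (h ((k:ℝ) * η)) < ε₂ := hηball t ht _ hgmem hdist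
    have h2 : dist (h ((k:ℝ) * η)) (c k) ≤ dist (h ((k:ℝ) * η)) (v t) :=
      (hcd k) ▸ Metric.infDist_le_dist_of_mem (hv.2 t)
    have hwt : w t = c k := by rw [hwdef]
    rw [hwt]
    calc ‖h t - c k‖ = dist (h t) (c k) := (dist_eq_norm _ _).symm
      _ ≤ dist (h t) (h ((k:ℝ) * η)) + dist (h ((k:ℝ) * η)) (c k) := dist_triangle _ _ _
      _ ≤ ε₂ + dist (h ((k:ℝ) * η)) (v t) := by linarith
      _ ≤ ε₂ + (dist (h ((k:ℝ) * η)) (h t) + dist (h t) (v t)) := by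
          linarith [dist_triangle (h ((k:ℝ) * η)) (h t) (v t)]
      _ ≤ 2 * ε₂ + ‖h t - v t‖ := by
          rw [dist_comm (h ((k:ℝ) * η)) (h t)] at *
          rw [dist_eq_norm (h t) (v t)]
          linarith
  -- integral estimates
  have hhII : IntervalIntegrable h volume 0 T := hhcont.intervalIntegrable 0 T
  have hvwII : IntervalIntegrable (fun s => ‖v s - w s‖) volume 0 T := (hvII.sub hwII).norm
  have hvhII : IntervalIntegrable (fun s => ‖v s - h s‖) volume 0 T := (hvII.sub hhII).norm
  have hhvII : IntervalIntegrable (fun s => ‖h s - v s‖) volume 0 T := (hhII.sub hvII).norm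
  have hhwII : IntervalIntegrable (fun s => ‖h s - w s‖) volume 0 T := (hhII.sub hwII).norm
  have step1 : (∫ s in (0:ℝ)..T, ‖v s - w s‖)
      ≤ (∫ s in (0:ℝ)..T, ‖v s - h s‖) + ∫ s in (0:ℝ)..T, ‖h s - w s‖ := by
    rw [← intervalIntegral.integral_add hvhII hhwII]
    apply intervalIntegral.integral_mono_on hT hvwII (hvhII.add hhwII)
    intro s _
    have := norm_add_le (v s - h s) (h s - w s)
    simpa using this
  have step2 : (∫ s in (0:ℝ)..T, ‖h s - w s‖)
      ≤ 2 * ε₂ * T + ∫ s in (0:ℝ)..T, ‖h s - v s‖ := by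
    have hconstII : IntervalIntegrable (fun _ : ℝ => 2 * ε₂) volume 0 T :=
      intervalIntegrable_const
    have := intervalIntegral.integral_mono_on hT hhwII (hconstII.add hhvII) key
    rw [intervalIntegral.integral_add hconstII hhvII, intervalIntegral.integral_const,
      smul_eq_mul, sub_zero, mul_comm (T:ℝ) (2*ε₂)] at this
    exact this
  have step3 : (∫ s in (0:ℝ)..T, ‖v s - h s‖) ≤ ε/8 := by
    have heq : (∫ s in (0:ℝ)..T, ‖v s - h s‖) = ∫ s in (0:ℝ)..T, ‖f s - h s‖ := by
      apply intervalIntegral.integral_congr_ae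
      apply Filter.Eventually.of_forall
      intro s hs
      rw [Set.uIoc_of_le hT] at hs
      rw [hfdef, Set.indicator_of_mem hs]
    rw [heq, intervalIntegral.integral_of_le hT]
    refine le_trans ?_ hhclose
    exact setIntegral_le_integral (hfInt.sub hhInt).norm
      (Filter.Eventually.of_forall fun s => norm_nonneg _)
  have step4 : (∫ s in (0:ℝ)..T, ‖h s - v s‖) = ∫ s in (0:ℝ)..T, ‖v s - h s‖ := by
    apply intervalIntegral.integral_congr
    intro s _
    exact norm_sub_rev _ _
  refine ⟨w, ⟨hwm, hwV⟩, hwpc, ?_⟩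
  have hfinal : (∫ s in (0:ℝ)..T, ‖v s - w s‖) ≤ ε/8 + (2*ε₂*T + ε/8) := by
    rw [step4] at step2
    linarith
  have hbound : 2*ε₂*T ≤ ε/4 := by
    rw [hε₂def]
    have h1 : 2 * (ε / (8 * (T + 1))) * T = (ε * T) / (4 * (T + 1)) := by
      field_simp; ring
    rw [h1, div_le_div_iff₀ (by positivity) (by norm_num)]
    nlinarith
  linarith


/-- the closure of an invariant control set is positively invariant -/
theorem clC_posInv (S : CAS d m) {C : Set (Fin d → ℝ)} (hC : S.isInvControlSet C) :
    ∀ y ∈ closure C, ∀ v ∈ S.ctrl, ∀ t ≥ (0:ℝ), S.φ y v t ∈ closure C := by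
  intro y hy v hv t ht
  have hCstep : ∀ c ∈ C, S.φ c v t ∈ closure C := by
    intro c hc
    rw [hC.2 c hc]
    exact subset_closure ⟨v, hv, t, ht, rfl⟩
  rw [Metric.mem_closure_iff]
  intro ε hε
  obtain ⟨CL, hCL0, hCLb⟩ := S.dist_phi (T := t) ht
  obtain ⟨c, hcC, hcy⟩ := Metric.mem_closure_iff.1 hy (ε / (2 * CL)) (by positivity)
  have h1 : ‖S.φ y v t - S.φ c v t‖ ≤ CL * ‖y - c‖ :=
    hCLb hv y c t ⟨ht, le_rfl⟩
  have h2 : CL * ‖y - c‖ < ε / 2 := by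
    have : ‖y - c‖ < ε / (2 * CL) := by rwa [← dist_eq_norm]
    calc CL * ‖y - c‖ < CL * (ε / (2 * CL)) := by
          exact mul_lt_mul_of_pos_left this hCL0
      _ = ε / 2 := by field_simp
  obtain ⟨b, hbC, hb⟩ := Metric.mem_closure_iff.1 (hCstep c hcC) (ε / 2) (by positivity)
  refine ⟨b, hbC, ?_⟩
  calc dist (S.φ y v t) b ≤ dist (S.φ y v t) (S.φ c v t) + dist (S.φ c v t) b :=
        dist_triangle _ _ _
    _ < ε := by rw [dist_eq_norm]; linarith

end CAS

/-- Let `M` be compact, positively invariant and locally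
accessible.  Then every invariant control set `C ⊆ M` has a compact neighborhood
`𝒰` such that `C = ⋂_{x ∈ 𝒰} cl 𝒪⁺_pc(x)`. -/
theorem stmt15 {d m : ℕ} (S : CAS d m) (M C : Set (Fin d → ℝ))
    (hMc : IsCompact M) (hM : S.posInv M) (hacc : S.locAccOn M)
    (hC : S.isInvControlSet C) (hCM : C ⊆ M) :
    ∃ U : Set (Fin d → ℝ), IsCompact U ∧ U ∈ 𝓝ˢ C ∧
      C = ⋂ x ∈ U, closure (S.reachPC x) := by
  classical
  obtain ⟨x₀, hx₀⟩ := hC.1.1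
  obtain ⟨v₀, hv₀, -⟩ := hC.1.2.1.1 x₀ hx₀
  have hVne : S.V.Nonempty := ⟨v₀ 0, hv₀.2 0⟩
  have hMclosed : IsClosed M := hMc.isClosed
  have hclCM : closure C ⊆ M := closure_minimal hCM hMclosed
  -- the reachable set from any point of `closure C` stays in `closure C`
  have hreach_sub : ∀ y ∈ closure C, S.reach y ⊆ closure C := by
    rintro y hy z ⟨v, hv, t, ht, hz⟩
    rw [← hz]
    exact S.clC_posInv hC y hy v hv t ht
  -- from any point of `closure C` one can reach a point of `C`
  have hhit : ∀ y ∈ closure C, ∃ p ∈ C, p ∈ S.reach y := by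
    intro y hy
    obtain ⟨p₀, hp₀O, -⟩ := (hacc y (hclCM hy) 1 one_pos univ Filter.univ_mem).1
    set O : Set (Fin d → ℝ) := interior (S.reachLe 1 y) with hOdef
    have hOopen : IsOpen O := isOpen_interior
    have hOsub : O ⊆ closure C := by
      intro z hz
      exact hreach_sub y hy (S.reachLe_subset_reach 1 y (interior_subset hz))
    have hp₀cl : p₀ ∈ closure C := hOsub hp₀O
    obtain ⟨q, hqO, hqC⟩ := (_root_.mem_closure_iff.1 hp₀cl O hOopen hp₀O)
    exact ⟨q, hqC, S.reachLe_subset_reach 1 y (interior_subset hqO)⟩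
  -- `C` is contained in the closure of the reachable set of any point of `closure C`
  have hCsubreach : ∀ y ∈ closure C, C ⊆ closure (S.reach y) := by
    intro y hy
    obtain ⟨p, hpC, hpy⟩ := hhit y hy
    calc C ⊆ closure C := subset_closure
      _ = closure (S.reach p) := hC.2 p hpC
      _ ⊆ closure (S.reach y) := closure_mono (S.reach_trans hpy)
  -- `C` is closed
  have hCeq : closure C = C := by
    apply hC.1.2.2 (closure C) subset_closure
    constructor
    · intro y hy
      exact ⟨v₀, hv₀, fun t ht => S.clC_posInv hC y hy v₀ hv₀ t ht⟩
    · intro y hy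
      exact closure_minimal (hCsubreach y hy) isClosed_closure
  have hCclosed : IsClosed C := by
    rw [← hCeq]; exact isClosed_closure
  have hCcomp : IsCompact C := hMc.of_isClosed_subset hCclosed hCM
  have hdense : ∀ p ∈ C, closure (S.reach p) = C := by
    intro p hp
    rw [← hC.2 p hp, hCeq]
  -- robust steering into `C` from a neighborhood of each point of `C`
  have hsteer : ∀ c ∈ C, ∃ δc > 0, ∀ x, dist x c < δc → ∃ p ∈ C, p ∈ S.reach x := by
    intro c hc
    obtain ⟨p₀, hp₀O, -⟩ := (hacc c (hCM hc) 1 one_pos univ Filter.univ_mem).1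
    set O : Set (Fin d → ℝ) := interior (S.reachLe 1 c) with hOdef
    have hOopen : IsOpen O := isOpen_interior
    have hOsub : O ⊆ C := by
      intro z hz
      rw [← hCeq]
      exact hreach_sub c (subset_closure hc) (S.reachLe_subset_reach 1 c (interior_subset hz))
    have hp₀cl : p₀ ∈ closure (S.reach c) := by rw [hdense c hc]; exact hOsub hp₀O
    obtain ⟨z, hzO, hzreach⟩ := (_root_.mem_closure_iff.1 hp₀cl O hOopen hp₀O)
    obtain ⟨v, hv, t, ht, hzeq⟩ := hzreach
    obtain ⟨r, hr0, hrball⟩ := Metric.isOpen_iff.1 hOopen z hzO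
    obtain ⟨CL, hCL0, hCLb⟩ := S.dist_phi (T := t) ht
    refine ⟨r / (CL + 1), by positivity, ?_⟩
    intro x hx
    have h1 : ‖S.φ x v t - S.φ c v t‖ ≤ CL * ‖x - c‖ := hCLb hv x c t ⟨ht, le_rfl⟩
    have h2 : CL * ‖x - c‖ < r := by
      have hxc : ‖x - c‖ < r / (CL + 1) := by rwa [← dist_eq_norm]
      calc CL * ‖x - c‖ ≤ CL * (r / (CL + 1)) :=
            mul_le_mul_of_nonneg_left hxc.le hCL0.le
        _ < r := by
            rw [mul_div_assoc']
            rw [div_lt_iff₀ (by positivity)]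
            nlinarith
    have hmem : S.φ x v t ∈ Metric.ball z r := by
      rw [Metric.mem_ball, dist_eq_norm, ← hzeq]
      linarith
    exact ⟨S.φ x v t, hOsub (hrball hmem), ⟨v, hv, t, ht, rfl⟩⟩
  -- from reaching `C` exactly to density of the piecewise-constant reachable set
  have hCsubPC : ∀ x : Fin d → ℝ, (∃ p ∈ C, p ∈ S.reach x) → C ⊆ closure (S.reachPC x) := by
    intro x ⟨p, hpC, hpx⟩
    have hCsub : C ⊆ closure (S.reach x) := by
      calc C = closure (S.reach p) := (hdense p hpC).symm
        _ ⊆ closure (S.reach x) := closure_mono (S.reach_trans hpx)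
    intro z hz
    rw [Metric.mem_closure_iff]
    intro ε hε
    obtain ⟨y', hy'reach, hy'close⟩ := Metric.mem_closure_iff.1 (hCsub hz) (ε/2) (by positivity)
    obtain ⟨v, hv, t, ht, hy'eq⟩ := hy'reach
    obtain ⟨δ, hδ0, hδb⟩ := S.phi_ctrl_close x (T := t) ht (ε := ε/2) (by positivity)
    obtain ⟨w, hw, hwpc, hwint⟩ := S.exists_pc_approx hv (T := t) (ε := δ) ht hδ0
    have hclose : ‖S.φ x v t - S.φ x w t‖ ≤ ε/2 := hδb v w hv hw hwint t ⟨ht, le_rfl⟩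
    refine ⟨S.φ x w t, ⟨w, hw, hwpc, t, ht, rfl⟩, ?_⟩
    have e2 : dist y' (S.φ x w t) ≤ ε/2 := by
      rw [← hy'eq, dist_eq_norm]
      exact hclose
    calc dist z (S.φ x w t) ≤ dist z y' + dist y' (S.φ x w t) := dist_triangle _ _ _
      _ < ε := by linarith [hy'close, e2]
  -- the compact neighborhood
  choose! δf hδf0 hδfp using hsteer
  set D : Set (Fin d → ℝ) := ⋃ c ∈ C, Metric.ball c (δf c) with hDdef
  have hDopen : IsOpen D := isOpen_biUnion fun c _ => Metric.isOpen_ball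
  have hCD : C ⊆ D := fun c hc => Set.mem_biUnion hc (Metric.mem_ball_self (hδf0 c hc))
  have hDprop : ∀ x ∈ D, ∃ p ∈ C, p ∈ S.reach x := by
    intro x hx
    rw [hDdef, Set.mem_iUnion₂] at hx
    obtain ⟨c, hc, hball⟩ := hx
    exact hδfp c hc x (Metric.mem_ball.1 hball)
  obtain ⟨r, hr0, hrsub⟩ := hCcomp.exists_cthickening_subset_open hDopen hCD
  refine ⟨Metric.cthickening r C, ?_, ?_, ?_⟩
  · exact hCcomp.cthickening
  · rw [mem_nhdsSet_iff_forall]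
    intro c hc
    exact Filter.mem_of_superset (Metric.ball_mem_nhds c hr0)
      ((Metric.ball_subset_thickening hc r).trans (Metric.thickening_subset_cthickening r C))
  · apply Set.Subset.antisymm
    · intro z hz
      rw [Set.mem_iInter₂]
      intro x hxU
      exact hCsubPC x (hDprop x (hrsub hxU)) hz
    · intro z hz
      have hx₀U : x₀ ∈ Metric.cthickening r C := Metric.self_subset_cthickening C hx₀
      have h1 := Set.mem_iInter₂.1 hz x₀ hx₀U
      have h2 : closure (S.reachPC x₀) ⊆ C := by
        calc closure (S.reachPC x₀) ⊆ closure (S.reach x₀) :=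
              closure_mono (S.reachPC_subset_reach x₀)
          _ = C := hdense x₀ hx₀
      exact h2 h1
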